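/- If u ∈ ℝ^d satisfies H̄u = 0 and, for every y ∈ ℝ^d, ∑_{g∈G} exp(−½‖y − gθ*‖²) · ( ⟨y − gθ*, gu⟩² − ‖u‖² ) = 0, then u = 0. -/

import Mathlib

open scoped BigOperators RealInnerProductSpace

noncomputable section

abbrev Euc (d : ℕ) := EuclideanSpace ℝ (Fin d)
abbrev Iso (d : ℕ) := Euc d ≃ₗᵢ[ℝ] Euc d

/-- The average `H̄ = (1/|H|) ∑_{h∈H} h` of a finite subgroup of linear isometries. -/
def groupAvg {d : ℕ} (H : Subgroup (Iso d)) [Fintype H] : Euc d →ₗ[ℝ] Euc d :=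
  (Fintype.card H : ℝ)⁻¹ • ∑ h : H, ((h : Iso d).toLinearEquiv : Euc d →ₗ[ℝ] Euc d)

private lemma aux_tendsto (b p a : ℝ) (hb : 0 < b) :
    Filter.Tendsto (fun c : ℝ => Real.exp (-(b * c)) * ((c * p) ^ 2 - a))
      Filter.atTop (nhds 0) := by
  have h1 : Filter.Tendsto (fun c : ℝ => (b * c) ^ 2 * Real.exp (-(b * c)))
      Filter.atTop (nhds 0) :=
    (Real.tendsto_pow_mul_exp_neg_atTop_nhds_zero 2).comp
      (Filter.tendsto_id.const_mul_atTop hb)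
  have h2 : Filter.Tendsto (fun c : ℝ => Real.exp (-(b * c))) Filter.atTop (nhds 0) :=
    Real.tendsto_exp_atBot.comp
      (Filter.tendsto_neg_atBot_iff.mpr (Filter.tendsto_id.const_mul_atTop hb))
  have h3 := (h1.const_mul (p ^ 2 / b ^ 2)).sub (h2.const_mul a)
  simp only [mul_zero, sub_zero] at h3
  convert h3 using 2 with c
  field_simp

/-- If `H̄u = 0` and
`∑_{g∈G} exp(-½‖y-gθ*‖²)(⟨y-gθ*, gu⟩² - ‖u‖²) = 0` for all `y`, then `u = 0`. -/
theorem second_order_score_vanishes {d : ℕ} (G : Subgroup (Iso d)) [Fintype G] (θstar : Euc d)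
    (H : Subgroup (Iso d)) [Fintype H]
    (hH : ∀ g : Iso d, g ∈ H ↔ g ∈ G ∧ g θstar = θstar)
    (u : Euc d) (hu : groupAvg H u = 0)
    (hvan : ∀ y : Euc d,
      ∑ g : G, Real.exp (-(1 / 2) * ‖y - (g : Iso d) θstar‖ ^ 2) *
        (⟪y - (g : Iso d) θstar, (g : Iso d) u⟫ ^ 2 - ‖u‖ ^ 2) = 0) :
    u = 0 := by
  classical
  -- ⟪θstar, u⟫ = 0 from hu
  have hfix : ∀ h : H, (h : Iso d) θstar = θstar := fun h => ((hH h).mp h.2).2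
  have hθu : ⟪θstar, u⟫ = 0 := by
    have h0 := congrArg (fun v : Euc d => ⟪θstar, v⟫) hu
    simp only [groupAvg, LinearMap.smul_apply, LinearMap.coe_sum, Finset.sum_apply,
      inner_smul_right, inner_zero_right] at h0
    have h1 : ∀ h : H, ⟪θstar, ((h : Iso d).toLinearEquiv : Euc d →ₗ[ℝ] Euc d) u⟫
        = ⟪θstar, u⟫ := by
      intro h
      have : ⟪(h : Iso d) θstar, (h : Iso d) u⟫ = ⟪θstar, u⟫ :=
        LinearIsometryEquiv.inner_map_map _ _ _
      rw [hfix h] at this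
      exact this
    rw [inner_sum, Finset.sum_congr rfl (fun h _ => h1 h), Finset.sum_const] at h0
    have hcard : (0 : ℝ) < (Fintype.card H : ℝ) := by
      exact_mod_cast Fintype.card_pos
    simp only [smul_eq_mul, nsmul_eq_mul, Finset.card_univ] at h0
    rwa [inv_mul_cancel_left₀ hcard.ne'] at h0
  -- per-g data
  set a : ℝ := ‖u‖ ^ 2 with ha
  have hgui : ∀ g : G, ⟪(g : Iso d) θstar, (g : Iso d) u⟫ = 0 := by
    intro g
    rw [LinearIsometryEquiv.inner_map_map]
    exact hθu
  -- key identity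
  have key : ∀ (g : G) (c : ℝ),
      Real.exp ((1 / 2) * ‖c • θstar - θstar‖ ^ 2) *
        (Real.exp (-(1 / 2) * ‖c • θstar - (g : Iso d) θstar‖ ^ 2) *
          (⟪c • θstar - (g : Iso d) θstar, (g : Iso d) u⟫ ^ 2 - a)) =
      Real.exp (-((1 / 2 * ‖θstar - (g : Iso d) θstar‖ ^ 2) * c)) *
        ((c * ⟪θstar, (g : Iso d) u⟫) ^ 2 - a) := by
    intro g c
    have hnorm : ‖(g : Iso d) θstar‖ = ‖θstar‖ := LinearIsometryEquiv.norm_map _ _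
    have hinner : ⟪c • θstar - (g : Iso d) θstar, (g : Iso d) u⟫
        = c * ⟪θstar, (g : Iso d) u⟫ := by
      rw [inner_sub_left, real_inner_smul_left, hgui g, sub_zero]
    rw [hinner, ← mul_assoc, ← Real.exp_add]
    congr 1
    have e1 : ‖c • θstar - θstar‖ ^ 2
        = ‖c • θstar‖ ^ 2 - 2 * ⟪c • θstar, θstar⟫ + ‖θstar‖ ^ 2 := norm_sub_sq_real _ _
    have e2 : ‖c • θstar - (g : Iso d) θstar‖ ^ 2
        = ‖c • θstar‖ ^ 2 - 2 * ⟪c • θstar, (g : Iso d) θstar⟫ + ‖(g : Iso d) θstar‖ ^ 2 :=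
      norm_sub_sq_real _ _
    have e3 : ‖θstar - (g : Iso d) θstar‖ ^ 2
        = ‖θstar‖ ^ 2 - 2 * ⟪θstar, (g : Iso d) θstar⟫ + ‖(g : Iso d) θstar‖ ^ 2 :=
      norm_sub_sq_real _ _
    rw [e1, e2, e3, hnorm, real_inner_smul_left, real_inner_smul_left,
      real_inner_self_eq_norm_sq]
    ring
  -- the transformed sum F
  set F : ℝ → ℝ := fun c => ∑ g : G,
    Real.exp (-((1 / 2 * ‖θstar - (g : Iso d) θstar‖ ^ 2) * c)) *
      ((c * ⟪θstar, (g : Iso d) u⟫) ^ 2 - a) with hF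
  have hF0 : ∀ c : ℝ, F c = 0 := by
    intro c
    rw [hF]
    simp only
    rw [← Finset.sum_congr rfl (fun g _ => key g c), ← Finset.mul_sum, hvan (c • θstar),
      mul_zero]
  -- limit of F
  have hlim : Filter.Tendsto F Filter.atTop
      (nhds (∑ g : G, if (g : Iso d) θstar = θstar then -a else 0)) := by
    rw [hF]
    apply tendsto_finset_sum
    intro g _
    by_cases hg : (g : Iso d) θstar = θstar
    · rw [if_pos hg]
      have hp : ⟪θstar, (g : Iso d) u⟫ = 0 := by
        have := hgui g
        rwa [hg] at this
      have heq : (fun c : ℝ => Real.exp (-(1 / 2 * ‖θstar - (g : Iso d) θstar‖ ^ 2 * c)) *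
          ((c * ⟪θstar, (g : Iso d) u⟫) ^ 2 - a)) = fun _ => -a := by
        funext c
        rw [hg, hp, sub_self, norm_zero]
        norm_num
      rw [heq]
      exact tendsto_const_nhds
    · simp only [hg, if_neg, if_false]
      have hb : 0 < 1 / 2 * ‖θstar - (g : Iso d) θstar‖ ^ 2 := by
        have : θstar - (g : Iso d) θstar ≠ 0 := sub_ne_zero.mpr (Ne.symm hg)
        have h4 : 0 < ‖θstar - (g : Iso d) θstar‖ := norm_pos_iff.mpr this
        positivity
      exact aux_tendsto _ _ _ hb
  have hzero : (∑ g : G, if (g : Iso d) θstar = θstar then -a else 0) = 0 := by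
    have : Filter.Tendsto F Filter.atTop (nhds 0) := by
      have : F = fun _ => (0 : ℝ) := funext hF0
      rw [this]; exact tendsto_const_nhds
    exact tendsto_nhds_unique hlim this
  rw [Finset.sum_ite, Finset.sum_const, Finset.sum_const_zero, add_zero, nsmul_eq_mul] at hzero
  have hmem : (1 : Iso d) ∈ G := one_mem G
  have hone : (⟨1, hmem⟩ : G) ∈ Finset.filter (fun g : G => (g : Iso d) θstar = θstar)
      Finset.univ := by
    simp
  have hcard2 : 0 < (Finset.filter (fun g : G => (g : Iso d) θstar = θstar)
      Finset.univ).card := Finset.card_pos.mpr ⟨_, hone⟩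
  have hA : a = 0 := by
    have hc : (0:ℝ) < ((Finset.filter (fun g : G => (g : Iso d) θstar = θstar)
        Finset.univ).card : ℝ) := by exact_mod_cast hcard2
    have := hzero
    rcases mul_eq_zero.mp this with h | h
    · exact absurd h hc.ne'
    · linarith [neg_eq_zero.mp h]
  have : ‖u‖ = 0 := by
    have := ha ▸ hA
    nlinarith [norm_nonneg u]
  exact norm_eq_zero.mp this
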